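/- There exist a finite simple C4-free graph G with at least one vertex and two functions a, b : V(G) → ℕ with a(x) ≥ 2 and b(x) ≥ 2 for all x, such that d_G(x) = a(x) + b(x) − 2 for every vertex x ∈ V(G), and moreover for every partition (A, B) of V(G) there is either a vertex x ∈ A with d_A(x) < a(x) or a vertex x ∈ B with d_B(x) < b(x). -/

import Mathlib

open Finset
open scoped Classical

variable {V : Type*}

/-- `nbrIn G A x` is the number of neighbors of `x` lying in `A`, i.e. `d_A(x)`. -/
noncomputable def nbrIn (G : SimpleGraph V) (A : Finset V) (x : V) : ℕ :=
  (A.filter fun y => G.Adj x y).card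

/-- `G` contains no cycle of length four: there are no four distinct vertices
`w,x,y,z` with `wx, xy, yz, zw` all edges. -/
def C4Free (G : SimpleGraph V) : Prop :=
  ∀ w x y z : V, w ≠ x → w ≠ y → w ≠ z → x ≠ y → x ≠ z → y ≠ z →
    ¬(G.Adj w x ∧ G.Adj x y ∧ G.Adj y z ∧ G.Adj z w)

/-- `A` is `f`-good: every vertex of `A` has at least `f u` neighbors in `A`. -/
def IsGood (G : SimpleGraph V) (f : V → ℕ) (A : Finset V) : Prop :=
  ∀ u ∈ A, f u ≤ nbrIn G A u

/-- `A` is `g`-degenerate: every non-empty subset `H ⊆ A` has a vertex `u`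
with `d_H(u) ≤ g u`. -/
def IsDegenerate (G : SimpleGraph V) (g : V → ℤ) (A : Finset V) : Prop :=
  ∀ H ⊆ A, H.Nonempty → ∃ u ∈ H, (nbrIn G H u : ℤ) ≤ g u

/-- `(A,B)` is a partition of the vertex set: disjoint, non-empty, covering. -/
def IsPartition [Fintype V] (A B : Finset V) : Prop :=
  Disjoint A B ∧ A.Nonempty ∧ B.Nonempty ∧ A ∪ B = Finset.univ

/-- `(A,B)` is a feasible pair: disjoint non-empty sets with `A` being `a`-good
and `B` being `b`-good. -/
def FeasiblePair (G : SimpleGraph V) (a b : V → ℕ) (A B : Finset V) : Prop :=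
  Disjoint A B ∧ A.Nonempty ∧ B.Nonempty ∧ IsGood G a A ∧ IsGood G b B

/-- `(A,B)` is an `(a,b)`-partition: a partition with `A` being `(a-1)`-degenerate
and `B` being `(b-1)`-degenerate. -/
def ABPartition [Fintype V] (G : SimpleGraph V) (a b : V → ℕ) (A B : Finset V) : Prop :=
  IsPartition A B ∧ IsDegenerate G (fun x => (a x : ℤ) - 1) A ∧
    IsDegenerate G (fun x => (b x : ℤ) - 1) B

/-- The number of edges of the subgraph of `G` induced on `A`. -/
noncomputable def edgesIn (G : SimpleGraph V) (A : Finset V) : ℕ :=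
  ((A ×ˢ A).filter fun p => G.Adj p.1 p.2).card / 2

/-- The weight `w(A,B) = |E(G[A])| + |E(G[B])| + Σ_{x∈A} b(x) + Σ_{x∈B} a(x)`. -/
noncomputable def weight (G : SimpleGraph V) (a b : V → ℕ) (A B : Finset V) : ℕ :=
  edgesIn G A + edgesIn G B + ∑ x ∈ A, b x + ∑ x ∈ B, a x

/-- `(A,B)` belongs to `𝒫`: it is an `(a,b)`-partition of maximum weight among
all `(a,b)`-partitions. -/
def MaxAB [Fintype V] (G : SimpleGraph V) (a b : V → ℕ) (A B : Finset V) : Prop :=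
  ABPartition G a b A B ∧
    ∀ A' B' : Finset V, ABPartition G a b A' B' → weight G a b A' B' ≤ weight G a b A B

/-- `starSet G f A` is `A* = {x ∈ A : d_A(x) ≤ f(x) - 1}`. -/
noncomputable def starSet (G : SimpleGraph V) (f : V → ℕ) (A : Finset V) : Finset V :=
  A.filter fun x => nbrIn G A x < f x
/-- There exist a `C4`-free graph `G` and functions `a, b ≥ 2` with
`d_G(x) = a(x) + b(x) - 2` for every vertex `x`, such that no partition `(A,B)` of `V(G)`
satisfies `d_A(x) ≥ a(x)` on `A` and `d_B(x) ≥ b(x)` on `B`. -/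
theorem sharpness_example :
    ∃ (n : ℕ) (G : SimpleGraph (Fin n)) (a b : Fin n → ℕ),
      0 < n ∧ C4Free G ∧ (∀ x, 2 ≤ a x) ∧ (∀ x, 2 ≤ b x) ∧
      (∀ x, G.degree x + 2 = a x + b x) ∧
      ∀ A B : Finset (Fin n), Disjoint A B → A.Nonempty → B.Nonempty →
        A ∪ B = Finset.univ →
        (∃ x ∈ A, nbrIn G A x < a x) ∨ (∃ x ∈ B, nbrIn G B x < b x) := by
  refine ⟨3, ⊤, fun _ => 2, fun _ => 2, by norm_num, ?_, fun _ => le_refl 2,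
    fun _ => le_refl 2, ?_, ?_⟩
  · intro w x y z hwx hwy hwz hxy hxz hyz _
    have : ({w, x, y, z} : Finset (Fin 3)).card ≤ 3 := le_trans (card_le_univ _) (by simp)
    rw [card_insert_of_notMem (by simp [hwx, hwy, hwz]),
        card_insert_of_notMem (by simp [hxy, hxz]),
        card_insert_of_notMem (by simp [hyz]), card_singleton] at this
    omega
  · intro x
    rw [← SimpleGraph.card_neighborSet_eq_degree]
    have h : (⊤ : SimpleGraph (Fin 3)).neighborSet x = {x}ᶜ := by
      ext y; simp [ne_comm]
    simp only [h]
    have h2 : (Finset.filter (Membership.mem ({x}ᶜ : Set (Fin 3))) Finset.univ)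
        = Finset.univ.erase x := by
      ext y; simp [Finset.mem_erase, eq_comm]
    simp [h2, Finset.card_erase_of_mem, Finset.filter_ne']
  · intro A B hdisj hA hB hunion
    left
    obtain ⟨x, hx⟩ := hA
    refine ⟨x, hx, ?_⟩
    show nbrIn ⊤ A x < 2
    have hcard : A.card + B.card = 3 := by
      have := Finset.card_union_of_disjoint hdisj
      rw [hunion] at this
      simpa using this.symm
    have hBcard : 1 ≤ B.card := Finset.card_pos.mpr hB
    have hAcard : A.card ≤ 2 := by omega
    have hsub : nbrIn ⊤ A x ≤ (A.erase x).card := by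
      apply Finset.card_le_card
      intro y hy
      simp only [nbrIn, Finset.mem_filter] at hy
      exact Finset.mem_erase.mpr ⟨fun h => (hy.2.ne (h ▸ rfl)), hy.1⟩
    have := Finset.card_erase_of_mem hx
    omega
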